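/- (Euclidean four function theorem, Batty–Bollmann) Let f₁, f₂, f₃, f₄ : ℝ^d → [0,∞) be Lebesgue integrable functions such that f₁(x)·f₂(y) ≤ f₃(x ∧ y)·f₄(x ∨ y) for all x, y ∈ ℝ^d. Then (∫ f₁)·(∫ f₂) ≤ (∫ f₃)·(∫ f₄), where integration is with respect to Lebesgue measure. -/

import Mathlib

open MeasureTheory

open scoped ENNReal NNReal

private lemma bb_key {u v w z : ℝ≥0∞} (hu : u ≤ w) (hv : v ≤ w) (huv : u * v ≤ w * z) :
    u + v ≤ w + z := by
  rcases eq_or_ne w 0 with rfl | hw0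
  · simp [le_zero_iff.mp hu, le_zero_iff.mp hv]
  rcases eq_or_ne w ∞ with rfl | hwt
  · simp
  rcases eq_or_ne z ∞ with rfl | hzt
  · simp
  have hu' : u ≠ ∞ := ne_top_of_le_ne_top hwt hu
  have hv' : v ≠ ∞ := ne_top_of_le_ne_top hwt hv
  lift u to ℝ≥0 using hu'
  lift v to ℝ≥0 using hv'
  lift w to ℝ≥0 using hwt
  lift z to ℝ≥0 using hzt
  rw [← ENNReal.coe_mul, ← ENNReal.coe_mul, ENNReal.coe_le_coe] at huv
  rw [ENNReal.coe_le_coe] at hu hv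
  rw [← ENNReal.coe_add, ← ENNReal.coe_add, ENNReal.coe_le_coe]
  have hw0' : (0 : ℝ) < w := by
    have := NNReal.coe_ne_zero.mpr (fun h => hw0 (by exact_mod_cast h))
    positivity
  rw [← NNReal.coe_le_coe] at *
  push_cast at *
  nlinarith [mul_nonneg (sub_nonneg.2 hu) (sub_nonneg.2 hv)]

private lemma bb_pointwise_aux {α : Type*} [LinearOrder α] (ψ₁ ψ₂ ψ₃ ψ₄ : α → ℝ≥0∞)
    (h : ∀ s t, ψ₁ s * ψ₂ t ≤ ψ₃ (s ⊓ t) * ψ₄ (s ⊔ t)) {s t : α} (hst : s ≤ t) :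
    ψ₁ s * ψ₂ t + ψ₁ t * ψ₂ s ≤ ψ₃ s * ψ₄ t + ψ₃ t * ψ₄ s := by
  have hw1 : ψ₁ s * ψ₂ t ≤ ψ₃ s * ψ₄ t := by
    simpa [inf_eq_left.2 hst, sup_eq_right.2 hst] using h s t
  have hw2 : ψ₁ t * ψ₂ s ≤ ψ₃ s * ψ₄ t := by
    simpa [inf_eq_right.2 hst, sup_eq_left.2 hst] using h t s
  have h1 := h s s
  have h2 := h t t
  simp only [inf_idem, sup_idem] at h1 h2
  have huv : (ψ₁ s * ψ₂ t) * (ψ₁ t * ψ₂ s) ≤ (ψ₃ s * ψ₄ t) * (ψ₃ t * ψ₄ s) := by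
    calc (ψ₁ s * ψ₂ t) * (ψ₁ t * ψ₂ s) = (ψ₁ s * ψ₂ s) * (ψ₁ t * ψ₂ t) := by ring
      _ ≤ (ψ₃ s * ψ₄ s) * (ψ₃ t * ψ₄ t) := mul_le_mul' h1 h2
      _ = (ψ₃ s * ψ₄ t) * (ψ₃ t * ψ₄ s) := by ring
  exact bb_key hw1 hw2 huv

private lemma bb_pointwise {α : Type*} [LinearOrder α] (ψ₁ ψ₂ ψ₃ ψ₄ : α → ℝ≥0∞)
    (h : ∀ s t, ψ₁ s * ψ₂ t ≤ ψ₃ (s ⊓ t) * ψ₄ (s ⊔ t)) (s t : α) :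
    ψ₁ s * ψ₂ t + ψ₁ t * ψ₂ s ≤ ψ₃ s * ψ₄ t + ψ₃ t * ψ₄ s := by
  rcases le_total s t with hst | hst
  · exact bb_pointwise_aux ψ₁ ψ₂ ψ₃ ψ₄ h hst
  · have := bb_pointwise_aux ψ₁ ψ₂ ψ₃ ψ₄ h hst
    calc ψ₁ s * ψ₂ t + ψ₁ t * ψ₂ s = ψ₁ t * ψ₂ s + ψ₁ s * ψ₂ t := add_comm _ _
      _ ≤ ψ₃ t * ψ₄ s + ψ₃ s * ψ₄ t := this
      _ = ψ₃ s * ψ₄ t + ψ₃ t * ψ₄ s := add_comm _ _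

private lemma bb_oneDim (ψ₁ ψ₂ ψ₃ ψ₄ : ℝ → ℝ≥0∞)
    (m₁ : Measurable ψ₁) (m₂ : Measurable ψ₂) (m₃ : Measurable ψ₃) (m₄ : Measurable ψ₄)
    (h : ∀ s t, ψ₁ s * ψ₂ t ≤ ψ₃ (s ⊓ t) * ψ₄ (s ⊔ t)) :
    (∫⁻ s, ψ₁ s) * (∫⁻ s, ψ₂ s) ≤ (∫⁻ s, ψ₃ s) * (∫⁻ s, ψ₄ s) := by
  set A := ∫⁻ s, ψ₁ s with hA
  set B := ∫⁻ s, ψ₂ s with hB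
  set C := ∫⁻ s, ψ₃ s with hC
  set D := ∫⁻ s, ψ₄ s with hD
  have step : ∀ s, ψ₁ s * B + A * ψ₂ s ≤ ψ₃ s * D + C * ψ₄ s := by
    intro s
    calc ψ₁ s * B + A * ψ₂ s
        = ∫⁻ t, (ψ₁ s * ψ₂ t + ψ₁ t * ψ₂ s) := by
          rw [lintegral_add_left (m₂.const_mul _), lintegral_const_mul _ m₂,
            lintegral_mul_const _ m₁]
      _ ≤ ∫⁻ t, (ψ₃ s * ψ₄ t + ψ₃ t * ψ₄ s) :=
          lintegral_mono fun t => bb_pointwise ψ₁ ψ₂ ψ₃ ψ₄ h s t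
      _ = ψ₃ s * D + C * ψ₄ s := by
          rw [lintegral_add_left (m₄.const_mul _), lintegral_const_mul _ m₄,
            lintegral_mul_const _ m₃]
  have key : A * B + A * B ≤ C * D + C * D := by
    calc A * B + A * B
        = ∫⁻ s, (ψ₁ s * B + A * ψ₂ s) := by
          rw [lintegral_add_left (m₁.mul_const _), lintegral_mul_const _ m₁,
            lintegral_const_mul _ m₂]
      _ ≤ ∫⁻ s, (ψ₃ s * D + C * ψ₄ s) := lintegral_mono step
      _ = C * D + C * D := by
          rw [lintegral_add_left (m₃.mul_const _), lintegral_mul_const _ m₃,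
            lintegral_const_mul _ m₄]
  rw [← two_mul, ← two_mul] at key
  exact (ENNReal.mul_le_mul_iff_right (by norm_num) (by norm_num)).mp key

private lemma bb_cons_inf {d : ℕ} (s t : ℝ) (x y : Fin d → ℝ) :
    (Fin.cons s x : Fin (d + 1) → ℝ) ⊓ Fin.cons t y = Fin.cons (s ⊓ t) (x ⊓ y) := by
  funext j
  refine Fin.cases ?_ ?_ j <;> simp [Pi.inf_apply]

private lemma bb_cons_sup {d : ℕ} (s t : ℝ) (x y : Fin d → ℝ) :
    (Fin.cons s x : Fin (d + 1) → ℝ) ⊔ Fin.cons t y = Fin.cons (s ⊔ t) (x ⊔ y) := by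
  funext j
  refine Fin.cases ?_ ?_ j <;> simp [Pi.sup_apply]

private lemma bb_main : ∀ (d : ℕ) (φ₁ φ₂ φ₃ φ₄ : (Fin d → ℝ) → ℝ≥0∞),
    Measurable φ₁ → Measurable φ₂ → Measurable φ₃ → Measurable φ₄ →
    (∀ x y, φ₁ x * φ₂ y ≤ φ₃ (x ⊓ y) * φ₄ (x ⊔ y)) →
    (∫⁻ x, φ₁ x) * (∫⁻ x, φ₂ x) ≤ (∫⁻ x, φ₃ x) * (∫⁻ x, φ₄ x) := by
  intro d
  induction d with
  | zero =>
    intro φ₁ φ₂ φ₃ φ₄ m₁ m₂ m₃ m₄ h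
    have hv : (volume : Measure (Fin 0 → ℝ)) = Measure.dirac isEmptyElim :=
      Measure.volume_pi_eq_dirac _
    rw [hv, lintegral_dirac' _ m₁, lintegral_dirac' _ m₂, lintegral_dirac' _ m₃,
      lintegral_dirac' _ m₄]
    simpa using h isEmptyElim isEmptyElim
  | succ d ih =>
    intro φ₁ φ₂ φ₃ φ₄ m₁ m₂ m₃ m₄ h
    set e := MeasurableEquiv.piFinSuccAbove (fun _ : Fin (d + 1) => ℝ) 0 with he
    have mp : MeasurePreserving e volume volume :=
      volume_preserving_piFinSuccAbove (fun _ : Fin (d + 1) => ℝ) 0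
    have hesymm : ∀ p : ℝ × (Fin d → ℝ), e.symm p = Fin.cons p.1 p.2 := by
      intro p
      show (Fin.insertNthEquiv (fun _ : Fin (d+1) => ℝ) 0) p = _
      simp [Fin.insertNthEquiv, Fin.insertNth_zero']
    have hint : ∀ (φ : (Fin (d + 1) → ℝ) → ℝ≥0∞), Measurable φ →
        ∫⁻ x, φ x = ∫⁻ x, ∫⁻ t, φ (Fin.cons t x) := by
      intro φ hm
      have hΦ : Measurable fun p : ℝ × (Fin d → ℝ) => φ (e.symm p) := hm.comp e.symm.measurable
      calc ∫⁻ x, φ x = ∫⁻ x, φ (e.symm (e x)) := by simp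
        _ = ∫⁻ p : ℝ × (Fin d → ℝ), φ (e.symm p) :=
            mp.lintegral_comp_emb e.measurableEmbedding (fun p => φ (e.symm p))
        _ = ∫⁻ p : ℝ × (Fin d → ℝ), φ (e.symm p) ∂((volume : Measure ℝ).prod volume) := by
            rw [← Measure.volume_eq_prod]
        _ = ∫⁻ x, ∫⁻ t, φ (e.symm (t, x)) := lintegral_prod_symm' _ hΦ
        _ = ∫⁻ x, ∫⁻ t, φ (Fin.cons t x) := by simp_rw [hesymm]
    have mΦ : ∀ (φ : (Fin (d + 1) → ℝ) → ℝ≥0∞), Measurable φ →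
        Measurable fun p : ℝ × (Fin d → ℝ) => φ (Fin.cons p.1 p.2) := by
      intro φ hm
      have : (fun p : ℝ × (Fin d → ℝ) => φ (Fin.cons p.1 p.2)) = fun p => φ (e.symm p) := by
        funext p; rw [hesymm]
      rw [this]; exact hm.comp e.symm.measurable
    set g₁ : (Fin d → ℝ) → ℝ≥0∞ := fun x => ∫⁻ t, φ₁ (Fin.cons t x) with hg₁
    set g₂ : (Fin d → ℝ) → ℝ≥0∞ := fun x => ∫⁻ t, φ₂ (Fin.cons t x) with hg₂
    set g₃ : (Fin d → ℝ) → ℝ≥0∞ := fun x => ∫⁻ t, φ₃ (Fin.cons t x) with hg₃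
    set g₄ : (Fin d → ℝ) → ℝ≥0∞ := fun x => ∫⁻ t, φ₄ (Fin.cons t x) with hg₄
    have mg₁ : Measurable g₁ := (mΦ φ₁ m₁).lintegral_prod_left'
    have mg₂ : Measurable g₂ := (mΦ φ₂ m₂).lintegral_prod_left'
    have mg₃ : Measurable g₃ := (mΦ φ₃ m₃).lintegral_prod_left'
    have mg₄ : Measurable g₄ := (mΦ φ₄ m₄).lintegral_prod_left'
    have hg : ∀ x y, g₁ x * g₂ y ≤ g₃ (x ⊓ y) * g₄ (x ⊔ y) := by
      intro x y
      refine bb_oneDim (fun t => φ₁ (Fin.cons t x)) (fun t => φ₂ (Fin.cons t y))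
        (fun t => φ₃ (Fin.cons t (x ⊓ y))) (fun t => φ₄ (Fin.cons t (x ⊔ y)))
        ((mΦ φ₁ m₁).comp measurable_prodMk_right)
        ((mΦ φ₂ m₂).comp measurable_prodMk_right)
        ((mΦ φ₃ m₃).comp measurable_prodMk_right)
        ((mΦ φ₄ m₄).comp measurable_prodMk_right) ?_
      intro s t
      have := h (Fin.cons s x) (Fin.cons t y)
      rwa [bb_cons_inf, bb_cons_sup] at this
    rw [hint φ₁ m₁, hint φ₂ m₂, hint φ₃ m₃, hint φ₄ m₄]
    exact ih g₁ g₂ g₃ g₄ mg₁ mg₂ mg₃ mg₄ hg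

private lemma bb_main' (d : ℕ) (φ₁ φ₂ φ₃ φ₄ : (Fin d → ℝ) → ℝ≥0∞)
    (m₁ : AEMeasurable φ₁) (m₂ : AEMeasurable φ₂)
    (m₃ : AEMeasurable φ₃) (m₄ : AEMeasurable φ₄)
    (h : ∀ x y, φ₁ x * φ₂ y ≤ φ₃ (x ⊓ y) * φ₄ (x ⊔ y)) :
    (∫⁻ x, φ₁ x) * (∫⁻ x, φ₂ x) ≤ (∫⁻ x, φ₃ x) * (∫⁻ x, φ₄ x) := by
  classical
  obtain ⟨S₁, hS₁sub, hS₁m, hS₁0⟩ :=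
    exists_measurable_superset_of_null (ae_iff.mp m₁.ae_eq_mk)
  obtain ⟨S₂, hS₂sub, hS₂m, hS₂0⟩ :=
    exists_measurable_superset_of_null (ae_iff.mp m₂.ae_eq_mk)
  obtain ⟨S₃, hS₃sub, hS₃m, hS₃0⟩ :=
    exists_measurable_superset_of_null (ae_iff.mp m₃.ae_eq_mk)
  obtain ⟨S₄, hS₄sub, hS₄m, hS₄0⟩ :=
    exists_measurable_superset_of_null (ae_iff.mp m₄.ae_eq_mk)
  set φ₁' : (Fin d → ℝ) → ℝ≥0∞ := S₁.piecewise (fun _ => 0) (m₁.mk φ₁) with hφ₁'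
  set φ₂' : (Fin d → ℝ) → ℝ≥0∞ := S₂.piecewise (fun _ => 0) (m₂.mk φ₂) with hφ₂'
  set φ₃' : (Fin d → ℝ) → ℝ≥0∞ := S₃.piecewise (fun _ => ∞) (m₃.mk φ₃) with hφ₃'
  set φ₄' : (Fin d → ℝ) → ℝ≥0∞ := S₄.piecewise (fun _ => ∞) (m₄.mk φ₄) with hφ₄'
  have mm₁ : Measurable φ₁' := Measurable.piecewise hS₁m measurable_const m₁.measurable_mk
  have mm₂ : Measurable φ₂' := Measurable.piecewise hS₂m measurable_const m₂.measurable_mk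
  have mm₃ : Measurable φ₃' := Measurable.piecewise hS₃m measurable_const m₃.measurable_mk
  have mm₄ : Measurable φ₄' := Measurable.piecewise hS₄m measurable_const m₄.measurable_mk
  have hle₁ : ∀ x, φ₁' x ≤ φ₁ x := by
    intro x
    by_cases hx : x ∈ S₁
    · simp [hφ₁', Set.piecewise, hx]
    · have : φ₁ x = m₁.mk φ₁ x := by
        by_contra hne
        exact hx (hS₁sub hne)
      simp [hφ₁', Set.piecewise, hx, ← this]
  have hle₂ : ∀ x, φ₂' x ≤ φ₂ x := by
    intro x
    by_cases hx : x ∈ S₂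
    · simp [hφ₂', Set.piecewise, hx]
    · have : φ₂ x = m₂.mk φ₂ x := by
        by_contra hne
        exact hx (hS₂sub hne)
      simp [hφ₂', Set.piecewise, hx, ← this]
  have hge₃ : ∀ x, φ₃ x ≤ φ₃' x := by
    intro x
    by_cases hx : x ∈ S₃
    · simp [hφ₃', Set.piecewise, hx]
    · have : φ₃ x = m₃.mk φ₃ x := by
        by_contra hne
        exact hx (hS₃sub hne)
      simp [hφ₃', Set.piecewise, hx, ← this]
  have hge₄ : ∀ x, φ₄ x ≤ φ₄' x := by
    intro x
    by_cases hx : x ∈ S₄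
    · simp [hφ₄', Set.piecewise, hx]
    · have : φ₄ x = m₄.mk φ₄ x := by
        by_contra hne
        exact hx (hS₄sub hne)
      simp [hφ₄', Set.piecewise, hx, ← this]
  have hae : ∀ (S : Set (Fin d → ℝ)), volume S = 0 →
      ∀ (φ φm : (Fin d → ℝ) → ℝ≥0∞), (S ⊇ {x | φ x ≠ φm x}) →
      S.piecewise (fun _ => (0:ℝ≥0∞)) φm =ᵐ[volume] φ ∧
      S.piecewise (fun _ => (∞:ℝ≥0∞)) φm =ᵐ[volume] φ := by
    intro S hS0 φ φm hsub
    have hS : ∀ᵐ x, x ∉ S := by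
      rw [ae_iff]
      simpa using hS0
    constructor <;> · filter_upwards [hS] with x hx
                      have : φ x = φm x := by
                        by_contra hne
                        exact hx (hsub hne)
                      simp [Set.piecewise, hx, this]
  have hae₁ := (hae S₁ hS₁0 φ₁ (m₁.mk φ₁) hS₁sub).1
  have hae₂ := (hae S₂ hS₂0 φ₂ (m₂.mk φ₂) hS₂sub).1
  have hae₃ := (hae S₃ hS₃0 φ₃ (m₃.mk φ₃) hS₃sub).2
  have hae₄ := (hae S₄ hS₄0 φ₄ (m₄.mk φ₄) hS₄sub).2
  have h' : ∀ x y, φ₁' x * φ₂' y ≤ φ₃' (x ⊓ y) * φ₄' (x ⊔ y) := fun x y =>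
    calc φ₁' x * φ₂' y ≤ φ₁ x * φ₂ y := mul_le_mul' (hle₁ x) (hle₂ y)
      _ ≤ φ₃ (x ⊓ y) * φ₄ (x ⊔ y) := h x y
      _ ≤ φ₃' (x ⊓ y) * φ₄' (x ⊔ y) := mul_le_mul' (hge₃ _) (hge₄ _)
  have := bb_main d φ₁' φ₂' φ₃' φ₄' mm₁ mm₂ mm₃ mm₄ h'
  rwa [lintegral_congr_ae hae₁, lintegral_congr_ae hae₂, lintegral_congr_ae hae₃,
    lintegral_congr_ae hae₄] at this

theorem batty_bollmann (d : ℕ) (f₁ f₂ f₃ f₄ : (Fin d → ℝ) → ℝ)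
    (hnn₁ : ∀ x, 0 ≤ f₁ x) (hnn₂ : ∀ x, 0 ≤ f₂ x)
    (hnn₃ : ∀ x, 0 ≤ f₃ x) (hnn₄ : ∀ x, 0 ≤ f₄ x)
    (hi₁ : Integrable f₁) (hi₂ : Integrable f₂) (hi₃ : Integrable f₃) (hi₄ : Integrable f₄)
    (h : ∀ x y, f₁ x * f₂ y ≤ f₃ (x ⊓ y) * f₄ (x ⊔ y)) :
    (∫ x, f₁ x) * (∫ y, f₂ y) ≤ (∫ x, f₃ x) * (∫ y, f₄ y) := by
  set φ₁ : (Fin d → ℝ) → ℝ≥0∞ := fun x => ENNReal.ofReal (f₁ x) with hφ₁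
  set φ₂ : (Fin d → ℝ) → ℝ≥0∞ := fun x => ENNReal.ofReal (f₂ x) with hφ₂
  set φ₃ : (Fin d → ℝ) → ℝ≥0∞ := fun x => ENNReal.ofReal (f₃ x) with hφ₃
  set φ₄ : (Fin d → ℝ) → ℝ≥0∞ := fun x => ENNReal.ofReal (f₄ x) with hφ₄
  have hφ : ∀ x y, φ₁ x * φ₂ y ≤ φ₃ (x ⊓ y) * φ₄ (x ⊔ y) := by
    intro x y
    rw [hφ₁, hφ₂, hφ₃, hφ₄]
    rw [← ENNReal.ofReal_mul (hnn₁ x), ← ENNReal.ofReal_mul (hnn₃ _)]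
    exact ENNReal.ofReal_le_ofReal (h x y)
  have key := bb_main' d φ₁ φ₂ φ₃ φ₄
    (hi₁.aemeasurable.ennreal_ofReal) (hi₂.aemeasurable.ennreal_ofReal)
    (hi₃.aemeasurable.ennreal_ofReal) (hi₄.aemeasurable.ennreal_ofReal) hφ
  have hfin : ∀ (f : (Fin d → ℝ) → ℝ), (∀ x, 0 ≤ f x) → Integrable f →
      (∫⁻ x, ENNReal.ofReal (f x)) ≠ ∞ := by
    intro f hnn hi
    have : (∫⁻ x, ENNReal.ofReal (f x)) = ∫⁻ x, ‖f x‖₊ := by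
      apply lintegral_congr
      intro x
      rw [← enorm_eq_nnnorm, ← ofReal_norm, Real.norm_of_nonneg (hnn x)]
    rw [this]
    exact hi.hasFiniteIntegral.ne
  have e₁ : ∫ x, f₁ x = (∫⁻ x, φ₁ x).toReal :=
    integral_eq_lintegral_of_nonneg_ae (Filter.Eventually.of_forall hnn₁) hi₁.aestronglyMeasurable
  have e₂ : ∫ x, f₂ x = (∫⁻ x, φ₂ x).toReal :=
    integral_eq_lintegral_of_nonneg_ae (Filter.Eventually.of_forall hnn₂) hi₂.aestronglyMeasurable
  have e₃ : ∫ x, f₃ x = (∫⁻ x, φ₃ x).toReal :=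
    integral_eq_lintegral_of_nonneg_ae (Filter.Eventually.of_forall hnn₃) hi₃.aestronglyMeasurable
  have e₄ : ∫ x, f₄ x = (∫⁻ x, φ₄ x).toReal :=
    integral_eq_lintegral_of_nonneg_ae (Filter.Eventually.of_forall hnn₄) hi₄.aestronglyMeasurable
  rw [e₁, e₂, e₃, e₄, ← ENNReal.toReal_mul, ← ENNReal.toReal_mul]
  exact ENNReal.toReal_mono
    (ENNReal.mul_ne_top (hfin f₃ hnn₃ hi₃) (hfin f₄ hnn₄ hi₄)) key
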